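/- Suppose assumptions (A1), (A2), (A3), and (A4) hold. Then there exists a constant C > 0, depending only on γ, α, the constants of (A1)–(A2), and on the C² norm of V, such that for every 0 < ε ≤ 1 and every solution (u, m) of Problem 1, each of the four functions f ∈ {u, u', m, m'} satisfies sup|f| ≤ C/√ε and |f(x) − f(y)| ≤ (C/√ε)·|x − y|^{1/2} for all x, y ∈ [0, 1]; in particular u, u', m, m' are ½-Hölder continuous. -/

import Mathlib

open Set intervalIntegral MeasureTheory

noncomputable section


lemma my_periodic_deriv {f : ℝ → ℝ} (hf : Differentiable ℝ f)
    (hp : Function.Periodic f 1) : Function.Periodic (deriv f) 1 := by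
  intro x
  have h1 : HasDerivAt (fun y : ℝ => f (y + 1)) (deriv f (x + 1) * 1) x :=
    ((hf (x + 1)).hasDerivAt).comp x ((hasDerivAt_id x).add_const 1)
  have h2 : (fun y : ℝ => f (y + 1)) = f := funext fun y => hp y
  rw [h2, mul_one] at h1
  exact h1.deriv.symm

lemma my_deriv_nonneg_of_monotone {g : ℝ → ℝ} (hm : Monotone g)
    (hd : Differentiable ℝ g) (x : ℝ) : 0 ≤ deriv g x := by
  have h := (hd x).hasDerivAt
  rw [hasDerivAt_iff_tendsto_slope] at h
  have h' : Filter.Tendsto (slope g x) (nhdsWithin x (Ioi x)) (nhds (deriv g x)) :=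
    h.mono_left (nhdsWithin_mono x fun y hy => ne_of_gt hy)
  refine le_of_tendsto_of_tendsto tendsto_const_nhds h' ?_
  filter_upwards [self_mem_nhdsWithin] with y hy
  have hxy : x < y := hy
  have : 0 ≤ g y - g x := sub_nonneg.mpr (hm hxy.le)
  rw [slope_def_field]
  have h2 : (0:ℝ) < y - x := sub_pos.mpr hxy
  positivity

lemma my_second_deriv_nonneg {H : ℝ → ℝ} (hH : ContDiff ℝ 2 H)
    (hc : ConvexOn ℝ Set.univ H) (p : ℝ) : 0 ≤ deriv (deriv H) p := by
  have hd1 : Differentiable ℝ H := hH.differentiable two_ne_zero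
  have hmono : Monotone (deriv H) := by
    have := hc.monotoneOn_deriv (fun x _ => (hd1 x))
    exact fun a b hab => this (mem_univ a) (mem_univ b) hab
  have hd2 : Differentiable ℝ (deriv H) := by
    have h := (contDiff_succ_iff_deriv.mp (by exact_mod_cast hH : ContDiff ℝ (1+1) H)).2.2
    exact h.differentiable one_ne_zero
  exact my_deriv_nonneg_of_monotone hmono hd2 p


lemma my_int_deriv_per {g g' : ℝ → ℝ} (h : ∀ x, HasDerivAt g (g' x) x)
    (hc : Continuous g') (hp : g 1 = g 0) :
    ∫ x in (0:ℝ)..1, g' x = 0 := by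
  rw [intervalIntegral.integral_eq_sub_of_hasDerivAt (fun x _ => h x)
    (hc.intervalIntegrable 0 1), hp, sub_self]

lemma my_ibp_per {f g f' g' : ℝ → ℝ} (hf : ∀ x, HasDerivAt f (f' x) x)
    (hg : ∀ x, HasDerivAt g (g' x) x) (hf' : Continuous f') (hg' : Continuous g')
    (hfp : f 1 = f 0) (hgp : g 1 = g 0) :
    ∫ x in (0:ℝ)..1, f x * g' x = - ∫ x in (0:ℝ)..1, f' x * g x := by
  have := intervalIntegral.integral_mul_deriv_eq_deriv_mul
    (fun x _ => hf x) (fun x _ => hg x)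
    (hf'.intervalIntegrable 0 1) (hg'.intervalIntegrable 0 1)
  rw [this, hfp, hgp]; ring

lemma my_young_sqrt {a p S : ℝ} (ha : 0 ≤ a) (hp : 0 ≤ p) (hS : 0 ≤ S)
    (h : ∀ t : ℝ, 0 < t → a ≤ (t * p + S / t) / 2) : a ≤ Real.sqrt (S * p) := by
  rcases eq_or_lt_of_le hS with hS0 | hSpos
  · -- S = 0
    have : ∀ t : ℝ, 0 < t → a ≤ t * p / 2 := by
      intro t ht; have := h t ht; rw [← hS0] at this; simpa using this
    have ha0 : a ≤ 0 := by
      by_contra hcon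
      push_neg at hcon
      rcases eq_or_lt_of_le hp with hp0 | hppos
      · have := this 1 one_pos; rw [← hp0] at this; simpa using (lt_of_lt_of_le hcon this)
      · have := this (a / p) (div_pos hcon hppos)
        rw [div_mul_cancel₀ _ (ne_of_gt hppos)] at this
        linarith
    calc a ≤ 0 := ha0
    _ ≤ _ := Real.sqrt_nonneg _
  · rcases eq_or_lt_of_le hp with hp0 | hppos
    · -- p = 0
      have : ∀ t : ℝ, 0 < t → a ≤ S / t / 2 := by
        intro t ht; have := h t ht; rw [← hp0] at this; simpa using this
      have ha0 : a ≤ 0 := by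
        by_contra hcon
        push_neg at hcon
        have h3 := this (S / a) (div_pos hSpos hcon)
        have h2 : S / (S / a) = a := by
          field_simp
        rw [h2] at h3; linarith
      calc a ≤ 0 := ha0
      _ ≤ _ := Real.sqrt_nonneg _
    · -- both positive
      set t := Real.sqrt (S / p) with ht
      have htpos : 0 < t := Real.sqrt_pos.mpr (div_pos hSpos hppos)
      have ht2 : t ^ 2 = S / p := Real.sq_sqrt (div_nonneg hS hp)
      have hSeq : S = t ^ 2 * p := by
        rw [ht2]; field_simp
      have e2 : S / t = t * p := by
        rw [hSeq]; field_simp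
      have e1 : t * p = Real.sqrt (S * p) := by
        have : S * p = (t * p) ^ 2 := by rw [hSeq]; ring
        rw [this, Real.sqrt_sq (by positivity)]
      have h1 := h t htpos
      rw [e2, e1] at h1
      linarith



-- core Hölder estimate for x ≤ y
lemma my_holder_core {f g : ℝ → ℝ} (hfd : ∀ x, HasDerivAt f (g x) x)
    (hgc : Continuous g) {S : ℝ}
    (hS : ∫ x in (0:ℝ)..1, (g x)^2 ≤ S)
    {x y : ℝ} (hx : x ∈ Icc (0:ℝ) 1) (hy : y ∈ Icc (0:ℝ) 1) (hxy : x ≤ y) :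
    |f y - f x| ≤ Real.sqrt S * |x - y| ^ ((1:ℝ)/2) := by
  have hg2 : Continuous fun x => (g x)^2 := hgc.pow 2
  have hS0 : (0:ℝ) ≤ S := le_trans (intervalIntegral.integral_nonneg zero_le_one
    (fun t _ => sq_nonneg _)) hS
  set S' := ∫ t in x..y, (g t)^2 with hS'def
  have hS'0 : 0 ≤ S' := intervalIntegral.integral_nonneg hxy (fun t _ => sq_nonneg _)
  have hS'S : S' ≤ S := by
    have h1 : ∫ t in (0:ℝ)..x, (g t)^2 ≥ 0 := intervalIntegral.integral_nonneg hx.1 (fun t _ => sq_nonneg _)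
    have h2 : ∫ t in y..(1:ℝ), (g t)^2 ≥ 0 := intervalIntegral.integral_nonneg hy.2 (fun t _ => sq_nonneg _)
    have hsplit : (∫ t in (0:ℝ)..x, (g t)^2) + (∫ t in x..y, (g t)^2) + (∫ t in y..(1:ℝ), (g t)^2)
        = ∫ t in (0:ℝ)..1, (g t)^2 := by
      rw [intervalIntegral.integral_add_adjacent_intervals (hg2.intervalIntegrable _ _)
        (hg2.intervalIntegrable _ _), intervalIntegral.integral_add_adjacent_intervals
        (hg2.intervalIntegrable _ _) (hg2.intervalIntegrable _ _)]
    nlinarith [hS]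
  have hftc : f y - f x = ∫ t in x..y, g t :=
    (intervalIntegral.integral_eq_sub_of_hasDerivAt (fun t _ => hfd t)
      (hgc.intervalIntegrable _ _)).symm
  have habs : |f y - f x| ≤ ∫ t in x..y, |g t| := by
    rw [hftc]; exact intervalIntegral.abs_integral_le_integral_abs hxy
  have hkey : (∫ t in x..y, |g t|) ≤ Real.sqrt (S' * (y - x)) := by
    apply my_young_sqrt (intervalIntegral.integral_nonneg hxy (fun t _ => abs_nonneg _))
      (by linarith) hS'0
    intro t ht
    have hpt : ∀ s : ℝ, |g s| ≤ (t + (g s)^2 / t) / 2 := by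
      intro s
      rw [← sub_nonneg]
      have heq : (t + (g s)^2 / t) / 2 - |g s| = (t - |g s|)^2 / (2*t) := by
        have htne : t ≠ 0 := ne_of_gt ht
        field_simp
        nlinarith [sq_abs (g s), sq_nonneg (g s)]
      rw [heq]
      positivity
    calc (∫ s in x..y, |g s|) ≤ ∫ s in x..y, (t + (g s)^2 / t) / 2 := by
          apply intervalIntegral.integral_mono_on hxy
            ((hgc.abs).intervalIntegrable _ _)
            (((continuous_const.add (hg2.div_const t)).div_const 2).intervalIntegrable _ _)
          exact fun s _ => hpt s
      _ = (t * (y - x) + S' / t) / 2 := by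
          rw [intervalIntegral.integral_div]
          rw [intervalIntegral.integral_add (continuous_const.intervalIntegrable _ _)
            ((hg2.div_const t).intervalIntegrable _ _)]
          rw [intervalIntegral.integral_div, intervalIntegral.integral_const]
          rw [hS'def]
          simp only [smul_eq_mul]
          ring
  have hfin : Real.sqrt (S' * (y - x)) ≤ Real.sqrt S * |x - y| ^ ((1:ℝ)/2) := by
    have h1 : |x - y| = y - x := by rw [abs_sub_comm]; exact abs_of_nonneg (by linarith)
    rw [h1, ← Real.sqrt_eq_rpow, ← Real.sqrt_mul hS0]
    exact Real.sqrt_le_sqrt (by nlinarith)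
  linarith

lemma my_holder {f g : ℝ → ℝ} (hfd : ∀ x, HasDerivAt f (g x) x)
    (hgc : Continuous g) {S : ℝ}
    (hS : ∫ x in (0:ℝ)..1, (g x)^2 ≤ S) :
    ∀ x ∈ Icc (0:ℝ) 1, ∀ y ∈ Icc (0:ℝ) 1,
      |f x - f y| ≤ Real.sqrt S * |x - y| ^ ((1:ℝ)/2) := by
  intro x hx y hy
  rcases le_total x y with h | h
  · rw [abs_sub_comm]
    exact my_holder_core hfd hgc hS hx hy h
  · have := my_holder_core hfd hgc hS hy hx h
    rwa [abs_sub_comm y x] at this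

lemma my_sup {f : ℝ → ℝ} (hc : Continuous f) (hper : Function.Periodic f 1) {Kh M : ℝ}
    (hM : |∫ t in (0:ℝ)..1, f t| ≤ M)
    (hh : ∀ x ∈ Icc (0:ℝ) 1, ∀ y ∈ Icc (0:ℝ) 1, |f x - f y| ≤ Kh) :
    ∀ x : ℝ, |f x| ≤ M + Kh := by
  intro x
  have hz : f x = f (Int.fract x) := by
    have := hper.sub_int_mul_eq (x := x) (n := ⌊x⌋)
    rw [mul_one] at this
    exact this.symm
  have hzm : Int.fract x ∈ Icc (0:ℝ) 1 :=
    ⟨Int.fract_nonneg x, (Int.fract_lt_one x).le⟩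
  set z := Int.fract x
  have hdiff : |f z - ∫ t in (0:ℝ)..1, f t| ≤ Kh := by
    have he : f z - ∫ t in (0:ℝ)..1, f t = ∫ t in (0:ℝ)..1, (f z - f t) := by
      rw [intervalIntegral.integral_sub (continuous_const.intervalIntegrable _ _)
        (hc.intervalIntegrable _ _), intervalIntegral.integral_const]
      simp
    rw [he]
    calc |∫ t in (0:ℝ)..1, (f z - f t)| ≤ ∫ t in (0:ℝ)..1, |f z - f t| :=
          intervalIntegral.abs_integral_le_integral_abs zero_le_one
      _ ≤ ∫ t in (0:ℝ)..1, Kh := by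
          apply intervalIntegral.integral_mono_on zero_le_one
            ((continuous_const.sub hc).abs.intervalIntegrable _ _)
            (continuous_const.intervalIntegrable _ _)
          exact fun t ht => hh z hzm t ht
      _ = Kh := by simp
  rw [hz]
  calc |f z| ≤ |f z - ∫ t in (0:ℝ)..1, f t| + |∫ t in (0:ℝ)..1, f t| := by
        have := abs_add_le (f z - ∫ t in (0:ℝ)..1, f t) (∫ t in (0:ℝ)..1, f t)
        simpa using this
    _ ≤ Kh + M := add_le_add hdiff hM
    _ = M + Kh := by ring


lemma my_rpow_half (α t : ℝ) (hα : 0 < α) (ht : 0 ≤ t) :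
    t ^ α ≤ (1/2) * t ^ (α+1) + 2 ^ α := by
  rcases le_total t 2 with h | h
  · have h1 : t ^ α ≤ 2 ^ α := Real.rpow_le_rpow ht h hα.le
    have h2 : 0 ≤ (1/2) * t ^ (α+1) := by positivity
    linarith
  · have ht0 : 0 < t := lt_of_lt_of_le two_pos h
    have h1 : t ^ (α+1) = t ^ α * t := by
      rw [Real.rpow_add_one (ne_of_gt ht0)]
    have h2 : t ^ α * 2 ≤ t ^ α * t := by
      apply mul_le_mul_of_nonneg_left h (Real.rpow_nonneg ht _)
    have h3 : 0 < (2:ℝ) ^ α := Real.rpow_pos_of_pos two_pos _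
    nlinarith
  
lemma my_absorb (α B t : ℝ) (hα : 0 < α) (hB : 0 < B) (ht : 0 ≤ t) :
    B * t ≤ (1/4) * t ^ (α+1) + B * (4*B) ^ (1/α) := by
  rcases le_total t ((4*B) ^ (1/α)) with h | h
  · have h1 : B * t ≤ B * (4*B) ^ (1/α) := mul_le_mul_of_nonneg_left h hB.le
    have h2 : 0 ≤ (1/4) * t ^ (α+1) := by positivity
    linarith
  · have hb0 : (0:ℝ) < (4*B) ^ (1/α) := Real.rpow_pos_of_pos (by linarith) _
    have ht0 : 0 < t := lt_of_lt_of_le hb0 h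
    have h1 : (4:ℝ)*B ≤ t ^ α := by
      have := Real.rpow_le_rpow hb0.le h hα.le
      rwa [← Real.rpow_mul (by linarith : (0:ℝ) ≤ 4*B), one_div,
        inv_mul_cancel₀ (ne_of_gt hα), Real.rpow_one] at this
    have h2 : t ^ (α+1) = t ^ α * t := Real.rpow_add_one (ne_of_gt ht0) α
    have h3 : 0 ≤ B * (4*B) ^ (1/α) := by positivity
    nlinarith


/-- `f : ℝ → ℝ` is ½-Hölder continuous: there is `K ≥ 0` with
`|f x - f y| ≤ K * |x - y| ^ (1/2)` for all `x y`. -/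
def IsHolderHalf (f : ℝ → ℝ) : Prop :=
  ∃ K : ℝ, 0 ≤ K ∧ ∀ x y : ℝ, |f x - f y| ≤ K * |x - y| ^ ((1 : ℝ) / 2)

/-- `f` is a 1-periodic function of class `C²` (a `C²` function on the torus `𝕋`). -/
def MemC2T (f : ℝ → ℝ) : Prop :=
  Function.Periodic f 1 ∧ ContDiff ℝ 2 f

/-- `f ∈ C^{2,1/2}(𝕋)`: 1-periodic, of class `C²`, with ½-Hölder continuous
second derivative. -/
def MemC2HalfT (f : ℝ → ℝ) : Prop :=
  MemC2T f ∧ IsHolderHalf (deriv (deriv f))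

/-- `(u, m)` is a solution of Problem 1 with Hamiltonian `H`, potential `V`,
exponent `α` and parameter `ε`: `u, m` are 1-periodic `C²` functions, `m > 0`
everywhere, and the system
`u - u'' + H(u') + V = m^α + ε (m - m'')`,
`m - m'' - (H'(u') m)' = 1 - ε (u - u'')`
holds pointwise. -/
def SolvesMFG (H V : ℝ → ℝ) (α ε : ℝ) (u m : ℝ → ℝ) : Prop :=
  MemC2T u ∧ MemC2T m ∧ (∀ x, 0 < m x) ∧
  (∀ x : ℝ, u x - deriv (deriv u) x + H (deriv u x) + V x
      = m x ^ α + ε * (m x - deriv (deriv m) x)) ∧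
  (∀ x : ℝ, m x - deriv (deriv m) x
      - deriv (fun y => deriv H (deriv u y) * m y) x
      = 1 - ε * (u x - deriv (deriv u) x))

/-- A bound `KV` on the `C²` norm of `V`. -/
def C2NormBound (KV : ℝ) (V : ℝ → ℝ) : Prop :=
  ∀ x : ℝ, |V x| ≤ KV ∧ |deriv V x| ≤ KV ∧ |deriv (deriv V) x| ≤ KV

/-- `f` satisfies `sup |f| ≤ K` and is ½-Hölder on `[0,1]` with constant `K`. -/
def SupHolderBound (K : ℝ) (f : ℝ → ℝ) : Prop :=
  (∀ x : ℝ, |f x| ≤ K) ∧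
  ∀ x ∈ Set.Icc (0:ℝ) 1, ∀ y ∈ Set.Icc (0:ℝ) 1,
    |f x - f y| ≤ K * |x - y| ^ ((1:ℝ)/2)

set_option maxHeartbeats 2000000 in
/-- Under assumptions (A1)–(A4), there is a constant `C > 0`,
depending only on `γ, α`, the constants of (A1)–(A2) and on the `C²` norm of
`V`, such that for every `0 < ε ≤ 1` and every solution `(u, m)` of Problem 1,
each of `u, u', m, m'` is bounded by `C/√ε` and ½-Hölder on `[0,1]` with
constant `C/√ε`. -/
theorem holder_bounds
    (α γ C1 C2 C3 tC1 tC2 tC3 KV : ℝ)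
    (hα : 0 < α) (hγ : 1 < γ)
    (hC1 : 0 < C1) (hC2 : 0 < C2) (hC3 : 0 < C3)
    (htC1 : 0 < tC1) (htC2 : 0 < tC2) (htC3 : 0 < tC3) :
    ∃ C > 0, ∀ H V : ℝ → ℝ, ContDiff ℝ 2 H → ConvexOn ℝ Set.univ H →
      Function.Periodic V 1 → ContDiff ℝ 2 V → C2NormBound KV V →
      (∀ p : ℝ, -C1 + C2 * |p| ^ γ ≤ H p ∧ H p ≤ C1 + C3 * |p| ^ γ) →
      (∀ p : ℝ, -tC1 + tC2 * |p| ^ γ ≤ p * deriv H p - H p ∧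
          p * deriv H p - H p ≤ tC1 + tC3 * |p| ^ γ) →
      ∀ ε : ℝ, 0 < ε → ε ≤ 1 → ∀ u m : ℝ → ℝ, SolvesMFG H V α ε u m →
        SupHolderBound (C / Real.sqrt ε) u ∧
        SupHolderBound (C / Real.sqrt ε) (deriv u) ∧
        SupHolderBound (C / Real.sqrt ε) m ∧
        SupHolderBound (C / Real.sqrt ε) (deriv m) := by
  classical
  set KV' := max KV 0 with hKV'def
  have hKV'0 : 0 ≤ KV' := le_max_right _ _
  set B' := 1 + tC1 + KV' with hB'def
  have hB'pos : 0 < B' := by positivity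
  set cB := B' * (4*B') ^ (1/α) with hcBdef
  have hcB0 : 0 ≤ cB := by positivity
  set K0 := C1 + KV' + 2 ^ α + cB with hK0def
  have h2a : (0:ℝ) < 2 ^ α := Real.rpow_pos_of_pos two_pos α
  have hK0pos : 0 < K0 := by positivity
  set KA := 1 + Real.sqrt K0 with hKAdef
  have hKApos : 0 < KA := by positivity
  set K2 := KV' * KA with hK2def
  have hK20 : 0 ≤ K2 := mul_nonneg hKV'0 hKApos.le
  refine ⟨1 + KA + Real.sqrt K0 + Real.sqrt K2, by positivity, ?_⟩
  intro H V hHC2 hHconv hVper hVC2 hVb hA1 hA2 ε hε hε1 u m hsol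
  set C := 1 + KA + Real.sqrt K0 + Real.sqrt K2 with hCdef
  obtain ⟨⟨hup, huC⟩, ⟨hmp, hmC⟩, hm0, heq1, heq2⟩ := hsol
  -- regularity of u
  have hud : Differentiable ℝ u := huC.differentiable two_ne_zero
  have hu1C : ContDiff ℝ 1 (deriv u) :=
    (contDiff_succ_iff_deriv.mp (show ContDiff ℝ (1+1) u by exact_mod_cast huC)).2.2
  have cu : Continuous u := huC.continuous
  have cu1 : Continuous (deriv u) := hu1C.continuous
  have hu1d : Differentiable ℝ (deriv u) := hu1C.differentiable one_ne_zero
  have cu2 : Continuous (deriv (deriv u)) := (contDiff_one_iff_deriv.mp hu1C).2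
  -- regularity of m
  have hmd : Differentiable ℝ m := hmC.differentiable two_ne_zero
  have hm1C : ContDiff ℝ 1 (deriv m) :=
    (contDiff_succ_iff_deriv.mp (show ContDiff ℝ (1+1) m by exact_mod_cast hmC)).2.2
  have cm : Continuous m := hmC.continuous
  have cm1 : Continuous (deriv m) := hm1C.continuous
  have hm1d : Differentiable ℝ (deriv m) := hm1C.differentiable one_ne_zero
  have cm2 : Continuous (deriv (deriv m)) := (contDiff_one_iff_deriv.mp hm1C).2
  -- regularity of V
  have hVd : Differentiable ℝ V := hVC2.differentiable two_ne_zero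
  have hV1C : ContDiff ℝ 1 (deriv V) :=
    (contDiff_succ_iff_deriv.mp (show ContDiff ℝ (1+1) V by exact_mod_cast hVC2)).2.2
  have cV : Continuous V := hVC2.continuous
  have cV1 : Continuous (deriv V) := hV1C.continuous
  have hV1d : Differentiable ℝ (deriv V) := hV1C.differentiable one_ne_zero
  have cV2 : Continuous (deriv (deriv V)) := (contDiff_one_iff_deriv.mp hV1C).2
  -- regularity of H
  have hHd : Differentiable ℝ H := hHC2.differentiable two_ne_zero
  have hH1C : ContDiff ℝ 1 (deriv H) :=
    (contDiff_succ_iff_deriv.mp (show ContDiff ℝ (1+1) H by exact_mod_cast hHC2)).2.2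
  have cH1 : Continuous (deriv H) := hH1C.continuous
  have hH1d : Differentiable ℝ (deriv H) := hH1C.differentiable one_ne_zero
  have cH2 : Continuous (deriv (deriv H)) := (contDiff_one_iff_deriv.mp hH1C).2
  -- periodicity
  have hu1per : Function.Periodic (deriv u) 1 := my_periodic_deriv hud hup
  have hm1per : Function.Periodic (deriv m) 1 := my_periodic_deriv hmd hmp
  have hV1per : Function.Periodic (deriv V) 1 := my_periodic_deriv hVd hVper
  have pu : u 1 = u 0 := by simpa using hup 0
  have pm : m 1 = m 0 := by simpa using hmp 0
  have pV : V 1 = V 0 := by simpa using hVper 0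
  have pu1 : deriv u 1 = deriv u 0 := by simpa using hu1per 0
  have pm1 : deriv m 1 = deriv m 0 := by simpa using hm1per 0
  have pV1 : deriv V 1 = deriv V 0 := by simpa using hV1per 0
  -- derivatives
  have du : ∀ x : ℝ, HasDerivAt u (deriv u x) x := fun x => (hud x).hasDerivAt
  have du1 : ∀ x : ℝ, HasDerivAt (deriv u) (deriv (deriv u) x) x := fun x => (hu1d x).hasDerivAt
  have dm : ∀ x : ℝ, HasDerivAt m (deriv m x) x := fun x => (hmd x).hasDerivAt
  have dm1 : ∀ x : ℝ, HasDerivAt (deriv m) (deriv (deriv m) x) x := fun x => (hm1d x).hasDerivAt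
  have dV : ∀ x : ℝ, HasDerivAt V (deriv V x) x := fun x => (hVd x).hasDerivAt
  have dV1 : ∀ x : ℝ, HasDerivAt (deriv V) (deriv (deriv V) x) x := fun x => (hV1d x).hasDerivAt
  have dHu : ∀ x : ℝ, HasDerivAt (fun y => H (deriv u y)) (deriv H (deriv u x) * (deriv (deriv u) x)) x :=
    fun x => (hHd (deriv u x)).hasDerivAt.comp x (du1 x)
  have dhh : ∀ x : ℝ, HasDerivAt (fun y => deriv H (deriv u y)) (deriv (deriv H) (deriv u x) * (deriv (deriv u) x)) x :=
    fun x => (hH1d (deriv u x)).hasDerivAt.comp x (du1 x)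
  have dhm : ∀ x : ℝ, HasDerivAt (fun y => deriv H (deriv u y) * m y) (deriv (deriv H) (deriv u x) * (deriv (deriv u) x) * m x + deriv H (deriv u x) * (deriv m x)) x :=
    fun x => (dhh x).mul (dm x)
  have dmal : ∀ x : ℝ, HasDerivAt (fun y => m y ^ α) (α * m x ^ (α-1) * (deriv m x)) x :=
    fun x => (Real.hasDerivAt_rpow_const (Or.inl (ne_of_gt (hm0 x)))).comp x (dm x)
  have hD : ∀ x : ℝ, deriv (fun y => deriv H (deriv u y) * m y) x = deriv (deriv H) (deriv u x) * (deriv (deriv u) x) * m x + deriv H (deriv u x) * (deriv m x) :=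
    fun x => (dhm x).deriv
  have heq2' : ∀ x : ℝ, m x - deriv (deriv m) x - (deriv (deriv H) (deriv u x) * (deriv (deriv u) x) * m x + deriv H (deriv u x) * (deriv m x)) = 1 - ε * (u x - deriv (deriv u) x) :=
    fun x => by rw [← hD x]; exact heq2 x
  -- more continuity
  have chH : Continuous (fun x => H (deriv u x)) := hHC2.continuous.comp cu1
  have chh : Continuous (fun x => deriv H (deriv u x)) := cH1.comp cu1
  have chhm : Continuous (fun x => deriv H (deriv u x) * m x) := chh.mul cm
  have ch2u1 : Continuous (fun x => deriv (deriv H) (deriv u x)) := cH2.comp cu1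
  have cD : Continuous (fun x => deriv (deriv H) (deriv u x) * (deriv (deriv u) x) * m x + deriv H (deriv u x) * (deriv m x)) := ((ch2u1.mul cu2).mul cm).add (chh.mul cm1)
  have cmal : Continuous (fun x => m x ^ α) :=
    cm.rpow_const (fun x => Or.inl (ne_of_gt (hm0 x)))
  have cmal1 : Continuous (fun x => m x ^ (α-1)) :=
    cm.rpow_const (fun x => Or.inl (ne_of_gt (hm0 x)))
  have cmalp : Continuous (fun x => m x ^ (α+1)) :=
    cm.rpow_const (fun x => Or.inl (ne_of_gt (hm0 x)))
  have cdmal : Continuous (fun x => α * m x ^ (α-1) * (deriv m x)) :=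
    ((continuous_const.mul cmal1).mul cm1)
  have hrpow : ∀ x : ℝ, m x ^ (α+1) = m x ^ α * m x := fun x => Real.rpow_add_one (ne_of_gt (hm0 x)) α
  have phm : (fun y => deriv H (deriv u y) * m y) 1 = (fun y => deriv H (deriv u y) * m y) 0 := by
    simp only
    rw [pu1, pm]
  have pHu : (fun y => H (deriv u y)) 1 = (fun y => H (deriv u y)) 0 := by
    simp only
    rw [pu1]
  have pmal : (fun y => m y ^ α) 1 = (fun y => m y ^ α) 0 := by
    simp only
    rw [pm]

  -- integrals of derivatives vanish
  have Zu1 : (∫ x in (0:ℝ)..1, deriv u x) = 0 := my_int_deriv_per du cu1 pu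
  have Zm1 : (∫ x in (0:ℝ)..1, deriv m x) = 0 := my_int_deriv_per dm cm1 pm
  have Zu2 : (∫ x in (0:ℝ)..1, deriv (deriv u) x) = 0 := my_int_deriv_per du1 cu2 pu1
  have Zm2 : (∫ x in (0:ℝ)..1, deriv (deriv m) x) = 0 := my_int_deriv_per dm1 cm2 pm1
  have ZD : (∫ x in (0:ℝ)..1, (deriv (deriv H) (deriv u x) * (deriv (deriv u) x) * m x + deriv H (deriv u x) * (deriv m x))) = 0 := my_int_deriv_per dhm cD phm
  -- integration by parts
  have P1 : (∫ x in (0:ℝ)..1, m x * (deriv (deriv u) x)) = - ∫ x in (0:ℝ)..1, (deriv m x) * deriv u x :=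
    my_ibp_per dm du1 cm1 cu2 pm pu1
  have P2 : (∫ x in (0:ℝ)..1, u x * (deriv (deriv m) x)) = - ∫ x in (0:ℝ)..1, (deriv u x) * deriv m x :=
    my_ibp_per du dm1 cu1 cm2 pu pm1
  have P3 : (∫ x in (0:ℝ)..1, u x * (deriv (deriv H) (deriv u x) * (deriv (deriv u) x) * m x + deriv H (deriv u x) * (deriv m x))) = - ∫ x in (0:ℝ)..1, (deriv u x) * (deriv H (deriv u x) * m x) :=
    my_ibp_per du dhm cu1 cD pu phm
  have P4 : (∫ x in (0:ℝ)..1, m x * (deriv (deriv m) x)) = - ∫ x in (0:ℝ)..1, (deriv m x) * deriv m x :=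
    my_ibp_per dm dm1 cm1 cm2 pm pm1
  have P5 : (∫ x in (0:ℝ)..1, u x * (deriv (deriv u) x)) = - ∫ x in (0:ℝ)..1, (deriv u x) * deriv u x :=
    my_ibp_per du du1 cu1 cu2 pu pu1
  have P6 : (∫ x in (0:ℝ)..1, H (deriv u x) * (deriv (deriv m) x)) = - ∫ x in (0:ℝ)..1, (deriv H (deriv u x) * (deriv (deriv u) x)) * deriv m x :=
    my_ibp_per dHu dm1 (chh.mul cu2) cm2 pHu pm1
  have P7 : (∫ x in (0:ℝ)..1, V x * (deriv (deriv m) x)) = - ∫ x in (0:ℝ)..1, (deriv V x) * deriv m x :=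
    my_ibp_per dV dm1 cV1 cm2 pV pm1
  have P8 : (∫ x in (0:ℝ)..1, deriv V x * (deriv m x)) = - ∫ x in (0:ℝ)..1, (deriv (deriv V) x) * m x :=
    my_ibp_per dV1 dm cV2 cm1 pV1 pm
  have P9 : (∫ x in (0:ℝ)..1, m x ^ α * (deriv (deriv m) x)) = - ∫ x in (0:ℝ)..1, (α * m x ^ (α-1) * (deriv m x)) * deriv m x :=
    my_ibp_per dmal dm1 cdmal cm2 pmal pm1

  -- integrated equation 1
  have hE1i : (∫ x in (0:ℝ)..1, (u x - (deriv (deriv u) x) + H (deriv u x) + V x)) = ∫ x in (0:ℝ)..1, (m x ^ α + ε * (m x - (deriv (deriv m) x))) := by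
    apply intervalIntegral.integral_congr
    intro x _
    exact heq1 x
  rw [intervalIntegral.integral_add (((cu.fun_sub cu2).fun_add chH).intervalIntegrable 0 1) ((cV).intervalIntegrable 0 1),
      intervalIntegral.integral_add ((cu.fun_sub cu2).intervalIntegrable 0 1) ((chH).intervalIntegrable 0 1),
      intervalIntegral.integral_sub ((cu).intervalIntegrable 0 1) ((cu2).intervalIntegrable 0 1),
      intervalIntegral.integral_add ((cmal).intervalIntegrable 0 1) ((continuous_const.fun_mul (cm.fun_sub cm2)).intervalIntegrable 0 1),
      intervalIntegral.integral_const_mul,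
      intervalIntegral.integral_sub ((cm).intervalIntegrable 0 1) ((cm2).intervalIntegrable 0 1)] at hE1i
  beta_reduce at hE1i
  -- integrated equation 2
  have hE2i : (∫ x in (0:ℝ)..1, (m x - (deriv (deriv m) x) - (deriv (deriv H) (deriv u x) * (deriv (deriv u) x) * m x + deriv H (deriv u x) * (deriv m x)))) = ∫ x in (0:ℝ)..1, ((1:ℝ) - ε * (u x - (deriv (deriv u) x))) := by
    apply intervalIntegral.integral_congr
    intro x _
    exact heq2' x
  rw [intervalIntegral.integral_sub ((cm.fun_sub cm2).intervalIntegrable 0 1) ((cD).intervalIntegrable 0 1),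
      intervalIntegral.integral_sub ((cm).intervalIntegrable 0 1) ((cm2).intervalIntegrable 0 1),
      intervalIntegral.integral_sub (((continuous_const : Continuous fun _ : ℝ => (1:ℝ))).intervalIntegrable 0 1) ((continuous_const.fun_mul (cu.fun_sub cu2)).intervalIntegrable 0 1),
      intervalIntegral.integral_const_mul,
      intervalIntegral.integral_sub ((cu).intervalIntegrable 0 1) ((cu2).intervalIntegrable 0 1)] at hE2i
  beta_reduce at hE2i
  rw [show (∫ x in (0:ℝ)..1, (1:ℝ)) = 1 by simp] at hE2i
  -- equation 1 times m
  have hE1m : (∫ x in (0:ℝ)..1, (u x * m x - m x * (deriv (deriv u) x) + H (deriv u x) * m x + V x * m x))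
      = ∫ x in (0:ℝ)..1, (m x ^ (α+1) + ε * (m x * m x) - ε * (m x * (deriv (deriv m) x))) := by
    apply intervalIntegral.integral_congr
    intro x _
    linear_combination (m x) * heq1 x - hrpow x
  rw [intervalIntegral.integral_add ((((cu.fun_mul cm).fun_sub (cm.fun_mul cu2)).fun_add (chH.fun_mul cm)).intervalIntegrable 0 1) ((cV.fun_mul cm).intervalIntegrable 0 1),
      intervalIntegral.integral_add (((cu.fun_mul cm).fun_sub (cm.fun_mul cu2)).intervalIntegrable 0 1) ((chH.fun_mul cm).intervalIntegrable 0 1),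
      intervalIntegral.integral_sub ((cu.fun_mul cm).intervalIntegrable 0 1) ((cm.fun_mul cu2).intervalIntegrable 0 1),
      intervalIntegral.integral_sub ((cmalp.fun_add (continuous_const.fun_mul (cm.fun_mul cm))).intervalIntegrable 0 1) ((continuous_const.fun_mul (cm.fun_mul cm2)).intervalIntegrable 0 1),
      intervalIntegral.integral_add ((cmalp).intervalIntegrable 0 1) ((continuous_const.fun_mul (cm.fun_mul cm)).intervalIntegrable 0 1),
      intervalIntegral.integral_const_mul, intervalIntegral.integral_const_mul] at hE1m
  beta_reduce at hE1m
  -- equation 2 times u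
  have hE2u : (∫ x in (0:ℝ)..1, (u x * m x - u x * (deriv (deriv m) x) - u x * (deriv (deriv H) (deriv u x) * (deriv (deriv u) x) * m x + deriv H (deriv u x) * (deriv m x))))
      = ∫ x in (0:ℝ)..1, (u x - ε * (u x * u x) + ε * (u x * (deriv (deriv u) x))) := by
    apply intervalIntegral.integral_congr
    intro x _
    linear_combination (u x) * heq2' x
  rw [intervalIntegral.integral_sub (((cu.fun_mul cm).fun_sub (cu.fun_mul cm2)).intervalIntegrable 0 1) ((cu.fun_mul cD).intervalIntegrable 0 1),
      intervalIntegral.integral_sub ((cu.fun_mul cm).intervalIntegrable 0 1) ((cu.fun_mul cm2).intervalIntegrable 0 1),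
      intervalIntegral.integral_add ((cu.fun_sub (continuous_const.fun_mul (cu.fun_mul cu))).intervalIntegrable 0 1) ((continuous_const.fun_mul (cu.fun_mul cu2)).intervalIntegrable 0 1),
      intervalIntegral.integral_sub ((cu).intervalIntegrable 0 1) ((continuous_const.fun_mul (cu.fun_mul cu)).intervalIntegrable 0 1),
      intervalIntegral.integral_const_mul, intervalIntegral.integral_const_mul] at hE2u
  beta_reduce at hE2u
  -- equation 1 times m''
  have hE1m2 : (∫ x in (0:ℝ)..1, (u x * (deriv (deriv m) x) - (deriv (deriv u) x) * (deriv (deriv m) x) + H (deriv u x) * (deriv (deriv m) x) + V x * (deriv (deriv m) x)))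
      = ∫ x in (0:ℝ)..1, (m x ^ α * (deriv (deriv m) x) + ε * (m x * (deriv (deriv m) x)) - ε * ((deriv (deriv m) x) * (deriv (deriv m) x))) := by
    apply intervalIntegral.integral_congr
    intro x _
    linear_combination ((deriv (deriv m) x)) * heq1 x
  rw [intervalIntegral.integral_add ((((cu.fun_mul cm2).fun_sub (cu2.fun_mul cm2)).fun_add (chH.fun_mul cm2)).intervalIntegrable 0 1) ((cV.fun_mul cm2).intervalIntegrable 0 1),
      intervalIntegral.integral_add (((cu.fun_mul cm2).fun_sub (cu2.fun_mul cm2)).intervalIntegrable 0 1) ((chH.fun_mul cm2).intervalIntegrable 0 1),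
      intervalIntegral.integral_sub ((cu.fun_mul cm2).intervalIntegrable 0 1) ((cu2.fun_mul cm2).intervalIntegrable 0 1),
      intervalIntegral.integral_sub (((cmal.fun_mul cm2).fun_add (continuous_const.fun_mul (cm.fun_mul cm2))).intervalIntegrable 0 1) ((continuous_const.fun_mul (cm2.fun_mul cm2)).intervalIntegrable 0 1),
      intervalIntegral.integral_add ((cmal.fun_mul cm2).intervalIntegrable 0 1) ((continuous_const.fun_mul (cm.fun_mul cm2)).intervalIntegrable 0 1),
      intervalIntegral.integral_const_mul, intervalIntegral.integral_const_mul] at hE1m2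
  beta_reduce at hE1m2
  -- equation 2 times u''
  have hE2u2 : (∫ x in (0:ℝ)..1, (m x * (deriv (deriv u) x) - (deriv (deriv m) x) * (deriv (deriv u) x) - (deriv (deriv H) (deriv u x) * (deriv (deriv u) x) * m x * (deriv (deriv u) x) + (deriv H (deriv u x) * (deriv (deriv u) x)) * deriv m x)))
      = ∫ x in (0:ℝ)..1, ((deriv (deriv u) x) - ε * (u x * (deriv (deriv u) x)) + ε * ((deriv (deriv u) x) * (deriv (deriv u) x))) := by
    apply intervalIntegral.integral_congr
    intro x _
    linear_combination ((deriv (deriv u) x)) * heq2' x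
  rw [intervalIntegral.integral_sub (((cm.fun_mul cu2).fun_sub (cm2.fun_mul cu2)).intervalIntegrable 0 1) (((((ch2u1.fun_mul cu2).fun_mul cm).fun_mul cu2).fun_add ((chh.fun_mul cu2).fun_mul cm1)).intervalIntegrable 0 1),
      intervalIntegral.integral_sub ((cm.fun_mul cu2).intervalIntegrable 0 1) ((cm2.fun_mul cu2).intervalIntegrable 0 1),
      intervalIntegral.integral_add ((((ch2u1.fun_mul cu2).fun_mul cm).fun_mul cu2).intervalIntegrable 0 1) (((chh.fun_mul cu2).fun_mul cm1).intervalIntegrable 0 1),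
      intervalIntegral.integral_add ((cu2.fun_sub (continuous_const.fun_mul (cu.fun_mul cu2))).intervalIntegrable 0 1) ((continuous_const.fun_mul (cu2.fun_mul cu2)).intervalIntegrable 0 1),
      intervalIntegral.integral_sub ((cu2).intervalIntegrable 0 1) ((continuous_const.fun_mul (cu.fun_mul cu2)).intervalIntegrable 0 1),
      intervalIntegral.integral_const_mul, intervalIntegral.integral_const_mul] at hE2u2
  beta_reduce at hE2u2
  -- commutation lemmas
  have Ccm1 : (∫ x in (0:ℝ)..1, (deriv m x) * deriv u x) = ∫ x in (0:ℝ)..1, (deriv u x) * deriv m x := by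
    apply intervalIntegral.integral_congr
    intro x _
    ring
  have Ccm2 : (∫ x in (0:ℝ)..1, (deriv (deriv m) x) * (deriv (deriv u) x)) = ∫ x in (0:ℝ)..1, (deriv (deriv u) x) * (deriv (deriv m) x) := by
    apply intervalIntegral.integral_congr
    intro x _
    ring

  -- nonnegativity facts
  have nA : 0 ≤ ∫ x in (0:ℝ)..1, m x :=
    intervalIntegral.integral_nonneg (by norm_num : (0:ℝ) ≤ 1) (fun x _ => (hm0 x).le)
  have nQ : 0 ≤ ∫ x in (0:ℝ)..1, m x ^ (α+1) :=
    intervalIntegral.integral_nonneg (by norm_num : (0:ℝ) ≤ 1) (fun x _ => Real.rpow_nonneg (hm0 x).le _)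
  have nJu : 0 ≤ ∫ x in (0:ℝ)..1, u x * u x :=
    intervalIntegral.integral_nonneg (by norm_num : (0:ℝ) ≤ 1) (fun x _ => mul_self_nonneg _)
  have nJu1 : 0 ≤ ∫ x in (0:ℝ)..1, (deriv u x) * deriv u x :=
    intervalIntegral.integral_nonneg (by norm_num : (0:ℝ) ≤ 1) (fun x _ => mul_self_nonneg _)
  have nJu2 : 0 ≤ ∫ x in (0:ℝ)..1, (deriv (deriv u) x) * (deriv (deriv u) x) :=
    intervalIntegral.integral_nonneg (by norm_num : (0:ℝ) ≤ 1) (fun x _ => mul_self_nonneg _)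
  have nJm : 0 ≤ ∫ x in (0:ℝ)..1, m x * m x :=
    intervalIntegral.integral_nonneg (by norm_num : (0:ℝ) ≤ 1) (fun x _ => mul_self_nonneg _)
  have nJm1 : 0 ≤ ∫ x in (0:ℝ)..1, (deriv m x) * deriv m x :=
    intervalIntegral.integral_nonneg (by norm_num : (0:ℝ) ≤ 1) (fun x _ => mul_self_nonneg _)
  have nJm2 : 0 ≤ ∫ x in (0:ℝ)..1, (deriv (deriv m) x) * (deriv (deriv m) x) :=
    intervalIntegral.integral_nonneg (by norm_num : (0:ℝ) ≤ 1) (fun x _ => mul_self_nonneg _)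
  have nH2 : 0 ≤ ∫ x in (0:ℝ)..1, deriv (deriv H) (deriv u x) * (deriv (deriv u) x) * m x * (deriv (deriv u) x) := by
    apply intervalIntegral.integral_nonneg (by norm_num : (0:ℝ) ≤ 1)
    intro x _
    have h1 : 0 ≤ deriv (deriv H) (deriv u x) := my_second_deriv_nonneg hHC2 hHconv _
    have h2 : deriv (deriv H) (deriv u x) * (deriv (deriv u) x) * m x * (deriv (deriv u) x) = (deriv (deriv H) (deriv u x) * m x) * ((deriv (deriv u) x) * (deriv (deriv u) x)) := by ring
    rw [h2]
    exact mul_nonneg (mul_nonneg h1 (hm0 x).le) (mul_self_nonneg _)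
  have nMm1 : 0 ≤ ∫ x in (0:ℝ)..1, (α * m x ^ (α-1) * (deriv m x)) * deriv m x := by
    apply intervalIntegral.integral_nonneg (by norm_num : (0:ℝ) ≤ 1)
    intro x _
    have h2 : (α * m x ^ (α-1) * (deriv m x)) * deriv m x = (α * m x ^ (α-1)) * ((deriv m x) * deriv m x) := by ring
    rw [h2]
    exact mul_nonneg (mul_nonneg hα.le (Real.rpow_nonneg (hm0 x).le _)) (mul_self_nonneg _)
  -- bounds from assumptions
  have bIH : -C1 ≤ ∫ x in (0:ℝ)..1, H (deriv u x) := by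
    have h := intervalIntegral.integral_mono_on (μ := volume) (f := fun _ : ℝ => -C1) (g := fun x => H (deriv u x)) (by norm_num : (0:ℝ) ≤ 1)
      ((continuous_const : Continuous fun _ : ℝ => -C1).intervalIntegrable 0 1)
      (chH.intervalIntegrable 0 1) (fun x _ => by
        have h1 := (hA1 (deriv u x)).1
        have h2 : 0 ≤ C2 * |deriv u x| ^ γ :=
          mul_nonneg hC2.le (Real.rpow_nonneg (abs_nonneg _) _)
        beta_reduce
        linarith)
    simpa using h
  have bIV : -KV' ≤ ∫ x in (0:ℝ)..1, V x := by
    have h := intervalIntegral.integral_mono_on (μ := volume) (f := fun _ : ℝ => -KV') (g := V) (by norm_num : (0:ℝ) ≤ 1)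
      ((continuous_const : Continuous fun _ : ℝ => -KV').intervalIntegrable 0 1)
      (cV.intervalIntegrable 0 1) (fun x _ => by
        have h1 := (abs_le.mp (hVb x).1).1
        have h2 : KV ≤ KV' := le_max_left _ _
        beta_reduce
        linarith)
    simpa using h
  have bIVm : (∫ x in (0:ℝ)..1, V x * m x) ≤ KV' * ∫ x in (0:ℝ)..1, m x := by
    have h := intervalIntegral.integral_mono_on (μ := volume) (f := fun x => V x * m x) (g := fun x => KV' * m x) (by norm_num : (0:ℝ) ≤ 1)
      ((cV.mul cm).intervalIntegrable 0 1)
      ((continuous_const.mul cm).intervalIntegrable 0 1) (fun x _ => by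
        have h1 := (abs_le.mp (hVb x).1).2
        have h2 : KV ≤ KV' := le_max_left _ _
        exact mul_le_mul_of_nonneg_right (by linarith) (hm0 x).le)
    rwa [intervalIntegral.integral_const_mul] at h
  have bIV2m : -(KV' * ∫ x in (0:ℝ)..1, m x) ≤ ∫ x in (0:ℝ)..1, (deriv (deriv V) x) * m x := by
    have h := intervalIntegral.integral_mono_on (μ := volume) (f := fun x => -KV' * m x) (g := fun x => deriv (deriv V) x * m x) (by norm_num : (0:ℝ) ≤ 1)
      ((continuous_const.mul cm).intervalIntegrable 0 1)
      ((cV2.mul cm).intervalIntegrable 0 1) (fun x _ => by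
        have h1 := (abs_le.mp (hVb x).2.2).1
        have h2 : KV ≤ KV' := le_max_left _ _
        exact mul_le_mul_of_nonneg_right (by linarith : -KV' ≤ deriv (deriv V) x) (hm0 x).le)
    rw [intervalIntegral.integral_const_mul] at h
    linarith
  have bGm : (∫ x in (0:ℝ)..1, H (deriv u x) * m x) - (∫ x in (0:ℝ)..1, (deriv u x) * (deriv H (deriv u x) * m x)) ≤ tC1 * ∫ x in (0:ℝ)..1, m x := by
    have hcomb : (∫ x in (0:ℝ)..1, (H (deriv u x) * m x - (deriv u x) * (deriv H (deriv u x) * m x)))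
        = (∫ x in (0:ℝ)..1, H (deriv u x) * m x) - ∫ x in (0:ℝ)..1, (deriv u x) * (deriv H (deriv u x) * m x) :=
      intervalIntegral.integral_sub ((chH.mul cm).intervalIntegrable 0 1) ((cu1.mul chhm).intervalIntegrable 0 1)
    have hmono := intervalIntegral.integral_mono_on (μ := volume) (f := fun x => H (deriv u x) * m x - deriv u x * (deriv H (deriv u x) * m x)) (g := fun x => tC1 * m x) (by norm_num : (0:ℝ) ≤ 1)
      (((chH.mul cm).sub (cu1.mul chhm)).intervalIntegrable 0 1)
      ((continuous_const.mul cm).intervalIntegrable 0 1) (fun x _ => by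
        have h1 := (hA2 (deriv u x)).1
        have h2 : 0 ≤ tC2 * |deriv u x| ^ γ :=
          mul_nonneg htC2.le (Real.rpow_nonneg (abs_nonneg _) _)
        have h3 : H (deriv u x) - (deriv u x) * deriv H (deriv u x) ≤ tC1 := by linarith
        have h4 := mul_le_mul_of_nonneg_right h3 (hm0 x).le
        calc H (deriv u x) * m x - (deriv u x) * (deriv H (deriv u x) * m x)
            = (H (deriv u x) - (deriv u x) * deriv H (deriv u x)) * m x := by ring
          _ ≤ tC1 * m x := h4)
    rw [intervalIntegral.integral_const_mul] at hmono
    beta_reduce at hmono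
    linarith
  have bMal : (∫ x in (0:ℝ)..1, m x ^ α) ≤ (1/2) * (∫ x in (0:ℝ)..1, m x ^ (α+1)) + 2 ^ α := by
    have h := intervalIntegral.integral_mono_on (μ := volume) (f := fun x => m x ^ α) (g := fun x => 1/2 * m x ^ (α+1) + 2 ^ α) (by norm_num : (0:ℝ) ≤ 1)
      (cmal.intervalIntegrable 0 1)
      (((continuous_const.mul cmalp).add continuous_const).intervalIntegrable 0 1)
      (fun x _ => my_rpow_half α (m x) hα (hm0 x).le)
    rw [intervalIntegral.integral_add ((continuous_const.fun_mul cmalp).intervalIntegrable 0 1)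
      ((continuous_const : Continuous fun _ : ℝ => (2:ℝ)^α).intervalIntegrable 0 1),
      intervalIntegral.integral_const_mul, intervalIntegral.integral_const] at h
    beta_reduce at h
    simpa using h
  have bBA : B' * (∫ x in (0:ℝ)..1, m x) ≤ (1/4) * (∫ x in (0:ℝ)..1, m x ^ (α+1)) + cB := by
    have h := intervalIntegral.integral_mono_on (μ := volume) (f := fun x => B' * m x) (g := fun x => 1/4 * m x ^ (α+1) + B' * (4*B') ^ (1/α)) (by norm_num : (0:ℝ) ≤ 1)
      ((continuous_const.mul cm).intervalIntegrable 0 1)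
      (((continuous_const.mul cmalp).add continuous_const).intervalIntegrable 0 1)
      (fun x _ => my_absorb α B' (m x) hα hB'pos (hm0 x).le)
    rw [intervalIntegral.integral_add ((continuous_const.fun_mul cmalp).intervalIntegrable 0 1)
      ((continuous_const : Continuous fun _ : ℝ => B'*(4*B')^(1/α)).intervalIntegrable 0 1),
      intervalIntegral.integral_const_mul, intervalIntegral.integral_const_mul, intervalIntegral.integral_const] at h
    beta_reduce at h
    rw [← hcBdef] at h
    simpa using h
  -- mean square bound
  have bMusq : (∫ x in (0:ℝ)..1, u x) * (∫ x in (0:ℝ)..1, u x) ≤ ∫ x in (0:ℝ)..1, u x * u x := by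
    have hnn : 0 ≤ ∫ x in (0:ℝ)..1, ((u x - ∫ t in (0:ℝ)..1, u t) * (u x - ∫ t in (0:ℝ)..1, u t)) :=
      intervalIntegral.integral_nonneg (by norm_num : (0:ℝ) ≤ 1) (fun x _ => mul_self_nonneg _)
    have hexp : (∫ x in (0:ℝ)..1, ((u x - ∫ t in (0:ℝ)..1, u t) * (u x - ∫ t in (0:ℝ)..1, u t)))
        = ∫ x in (0:ℝ)..1, (u x * u x - (2 * ∫ t in (0:ℝ)..1, u t) * u x
            + (∫ t in (0:ℝ)..1, u t) * (∫ t in (0:ℝ)..1, u t)) := by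
      apply intervalIntegral.integral_congr
      intro x _
      ring
    rw [hexp, intervalIntegral.integral_add (((cu.fun_mul cu).fun_sub (continuous_const.fun_mul cu)).intervalIntegrable 0 1)
        ((continuous_const : Continuous fun _ : ℝ => (∫ t in (0:ℝ)..1, u t) * (∫ t in (0:ℝ)..1, u t)).intervalIntegrable 0 1),
      intervalIntegral.integral_sub ((cu.fun_mul cu).intervalIntegrable 0 1) ((continuous_const.fun_mul cu).intervalIntegrable 0 1),
      intervalIntegral.integral_const_mul, intervalIntegral.integral_const] at hnn
    beta_reduce at hnn
    simp only [sub_zero, one_smul, smul_eq_mul, one_mul] at hnn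
    linarith only [hnn]
  -- scalar identities
  have c1 : (∫ x in (0:ℝ)..1, m x) = 1 - ε * (∫ x in (0:ℝ)..1, u x) := by
    linear_combination hE2i + Zm2 + ZD + ε * Zu2
  have c2 : (∫ x in (0:ℝ)..1, u x) + (∫ x in (0:ℝ)..1, H (deriv u x)) + (∫ x in (0:ℝ)..1, V x) = (∫ x in (0:ℝ)..1, m x ^ α) + ε * (∫ x in (0:ℝ)..1, m x) := by
    linear_combination hE1i + Zu2 - ε * Zm2
  have R3key : (∫ x in (0:ℝ)..1, H (deriv u x) * m x) + (∫ x in (0:ℝ)..1, V x * m x) - (∫ x in (0:ℝ)..1, (deriv u x) * (deriv H (deriv u x) * m x))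
      = (∫ x in (0:ℝ)..1, m x ^ (α+1)) + ε * (∫ x in (0:ℝ)..1, m x * m x) + ε * (∫ x in (0:ℝ)..1, (deriv m x) * deriv m x)
        - (∫ x in (0:ℝ)..1, u x) + ε * (∫ x in (0:ℝ)..1, u x * u x) + ε * (∫ x in (0:ℝ)..1, (deriv u x) * deriv u x) := by
    linear_combination hE1m - hE2u + P1 - Ccm1 - P2 - P3 - ε * P4 - ε * P5
  have G4 : (∫ x in (0:ℝ)..1, (deriv (deriv V) x) * m x) + (∫ x in (0:ℝ)..1, deriv (deriv H) (deriv u x) * (deriv (deriv u) x) * m x * (deriv (deriv u) x))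
      + (∫ x in (0:ℝ)..1, (α * m x ^ (α-1) * (deriv m x)) * deriv m x)
      + ε * (∫ x in (0:ℝ)..1, (deriv m x) * deriv m x) + ε * (∫ x in (0:ℝ)..1, (deriv (deriv m) x) * (deriv (deriv m) x))
      + ε * (∫ x in (0:ℝ)..1, (deriv u x) * deriv u x) + ε * (∫ x in (0:ℝ)..1, (deriv (deriv u) x) * (deriv (deriv u) x)) = 0 := by
    linear_combination hE1m2 - hE2u2 - P2 - Ccm2 - P6 - P7 + P8 + P9 + ε * P4 + P1 - Ccm1 - Zu2 + ε * P5
  -- the chain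
  have n1 : (∫ x in (0:ℝ)..1, u x) ≤ (∫ x in (0:ℝ)..1, m x ^ α) + ε * (∫ x in (0:ℝ)..1, m x) + C1 + KV' := by linarith only [c2, bIH, bIV]
  have n2 : (∫ x in (0:ℝ)..1, m x ^ (α+1)) + ε * (∫ x in (0:ℝ)..1, m x * m x) + ε * (∫ x in (0:ℝ)..1, (deriv m x) * deriv m x)
      + ε * (∫ x in (0:ℝ)..1, u x * u x) + ε * (∫ x in (0:ℝ)..1, (deriv u x) * deriv u x)
      ≤ (∫ x in (0:ℝ)..1, u x) + tC1 * (∫ x in (0:ℝ)..1, m x) + KV' * (∫ x in (0:ℝ)..1, m x) := by linarith only [R3key, bGm, bIVm]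
  have n4 : ε * (∫ x in (0:ℝ)..1, m x) ≤ (∫ x in (0:ℝ)..1, m x) := mul_le_of_le_one_left nA hε1
  have n5 : ε * (∫ x in (0:ℝ)..1, m x) + tC1 * (∫ x in (0:ℝ)..1, m x) + KV' * (∫ x in (0:ℝ)..1, m x) ≤ B' * (∫ x in (0:ℝ)..1, m x) := by
    rw [hB'def]
    linarith only [n4]
  have n6 : (1/4) * (∫ x in (0:ℝ)..1, m x ^ (α+1)) + ε * (∫ x in (0:ℝ)..1, m x * m x) + ε * (∫ x in (0:ℝ)..1, (deriv m x) * deriv m x)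
      + ε * (∫ x in (0:ℝ)..1, u x * u x) + ε * (∫ x in (0:ℝ)..1, (deriv u x) * deriv u x) ≤ K0 := by
    rw [hK0def]
    linarith only [n2, n1, bMal, n5, bBA, n4]
  have n7 : ε * (∫ x in (0:ℝ)..1, u x * u x) ≤ K0 := by
    have h1 : 0 ≤ ε * (∫ x in (0:ℝ)..1, m x * m x) := mul_nonneg hε.le nJm
    have h2 : 0 ≤ ε * (∫ x in (0:ℝ)..1, (deriv m x) * deriv m x) := mul_nonneg hε.le nJm1
    have h3 : 0 ≤ ε * (∫ x in (0:ℝ)..1, (deriv u x) * deriv u x) := mul_nonneg hε.le nJu1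
    linarith
  have n8 : ε * ((∫ x in (0:ℝ)..1, u x) * (∫ x in (0:ℝ)..1, u x)) ≤ K0 := by
    have := mul_le_mul_of_nonneg_left bMusq hε.le
    linarith
  have n9 : |ε * (∫ x in (0:ℝ)..1, u x)| ≤ Real.sqrt K0 := by
    rw [← Real.sqrt_sq_eq_abs]
    apply Real.sqrt_le_sqrt
    have h1 : (ε * (∫ x in (0:ℝ)..1, u x))^2 = ε * (ε * ((∫ x in (0:ℝ)..1, u x) * (∫ x in (0:ℝ)..1, u x))) := by ring
    rw [h1]
    calc ε * (ε * ((∫ x in (0:ℝ)..1, u x) * (∫ x in (0:ℝ)..1, u x))) ≤ ε * K0 :=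
          mul_le_mul_of_nonneg_left n8 hε.le
      _ ≤ K0 := mul_le_of_le_one_left hK0pos.le hε1
  have c10 : (∫ x in (0:ℝ)..1, m x) ≤ KA := by
    have := abs_le.mp n9
    rw [hKAdef]
    linarith
  have hKV'A : KV' * (∫ x in (0:ℝ)..1, m x) ≤ KV' * KA := mul_le_mul_of_nonneg_left c10 hKV'0
  have n11u1 : ε * (∫ x in (0:ℝ)..1, (deriv u x) * deriv u x) ≤ K2 := by
    have h1 : 0 ≤ ε * (∫ x in (0:ℝ)..1, (deriv m x) * deriv m x) := mul_nonneg hε.le nJm1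
    have h2 : 0 ≤ ε * (∫ x in (0:ℝ)..1, (deriv (deriv m) x) * (deriv (deriv m) x)) := mul_nonneg hε.le nJm2
    have h3 : 0 ≤ ε * (∫ x in (0:ℝ)..1, (deriv (deriv u) x) * (deriv (deriv u) x)) := mul_nonneg hε.le nJu2
    rw [hK2def]
    linarith
  have n11u2 : ε * (∫ x in (0:ℝ)..1, (deriv (deriv u) x) * (deriv (deriv u) x)) ≤ K2 := by
    have h1 : 0 ≤ ε * (∫ x in (0:ℝ)..1, (deriv m x) * deriv m x) := mul_nonneg hε.le nJm1
    have h2 : 0 ≤ ε * (∫ x in (0:ℝ)..1, (deriv (deriv m) x) * (deriv (deriv m) x)) := mul_nonneg hε.le nJm2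
    have h3 : 0 ≤ ε * (∫ x in (0:ℝ)..1, (deriv u x) * deriv u x) := mul_nonneg hε.le nJu1
    rw [hK2def]
    linarith
  have n11m1 : ε * (∫ x in (0:ℝ)..1, (deriv m x) * deriv m x) ≤ K2 := by
    have h1 : 0 ≤ ε * (∫ x in (0:ℝ)..1, (deriv u x) * deriv u x) := mul_nonneg hε.le nJu1
    have h2 : 0 ≤ ε * (∫ x in (0:ℝ)..1, (deriv (deriv m) x) * (deriv (deriv m) x)) := mul_nonneg hε.le nJm2
    have h3 : 0 ≤ ε * (∫ x in (0:ℝ)..1, (deriv (deriv u) x) * (deriv (deriv u) x)) := mul_nonneg hε.le nJu2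
    rw [hK2def]
    linarith
  have n11m2 : ε * (∫ x in (0:ℝ)..1, (deriv (deriv m) x) * (deriv (deriv m) x)) ≤ K2 := by
    have h1 : 0 ≤ ε * (∫ x in (0:ℝ)..1, (deriv u x) * deriv u x) := mul_nonneg hε.le nJu1
    have h2 : 0 ≤ ε * (∫ x in (0:ℝ)..1, (deriv m x) * deriv m x) := mul_nonneg hε.le nJm1
    have h3 : 0 ≤ ε * (∫ x in (0:ℝ)..1, (deriv (deriv u) x) * (deriv (deriv u) x)) := mul_nonneg hε.le nJu2
    rw [hK2def]
    linarith

  -- conclusion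
  set sε := Real.sqrt ε with hsedef
  have hsεpos : 0 < sε := Real.sqrt_pos.mpr hε
  have hsε1 : sε ≤ 1 := by rw [hsedef]; exact Real.sqrt_le_one.mpr hε1
  have squ1 : (∫ x in (0:ℝ)..1, (deriv u x) * deriv u x) = ∫ x in (0:ℝ)..1, (deriv u x)^2 := by
    apply intervalIntegral.integral_congr; intro x _; ring
  have squ2 : (∫ x in (0:ℝ)..1, (deriv (deriv u) x) * (deriv (deriv u) x)) = ∫ x in (0:ℝ)..1, (deriv (deriv u) x)^2 := by
    apply intervalIntegral.integral_congr; intro x _; ring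
  have sqm1 : (∫ x in (0:ℝ)..1, (deriv m x) * deriv m x) = ∫ x in (0:ℝ)..1, (deriv m x)^2 := by
    apply intervalIntegral.integral_congr; intro x _; ring
  have sqm2 : (∫ x in (0:ℝ)..1, (deriv (deriv m) x) * (deriv (deriv m) x)) = ∫ x in (0:ℝ)..1, (deriv (deriv m) x)^2 := by
    apply intervalIntegral.integral_congr; intro x _; ring
  have hJu1 : (∫ x in (0:ℝ)..1, (deriv u x)^2) ≤ K2/ε := by
    rw [← squ1, le_div_iff₀ hε]; linarith only [n11u1]
  have hJu2 : (∫ x in (0:ℝ)..1, (deriv (deriv u) x)^2) ≤ K2/ε := by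
    rw [← squ2, le_div_iff₀ hε]; linarith only [n11u2]
  have hJm1 : (∫ x in (0:ℝ)..1, (deriv m x)^2) ≤ K2/ε := by
    rw [← sqm1, le_div_iff₀ hε]; linarith only [n11m1]
  have hJm2 : (∫ x in (0:ℝ)..1, (deriv (deriv m) x)^2) ≤ K2/ε := by
    rw [← sqm2, le_div_iff₀ hε]; linarith only [n11m2]
  have Hu := my_holder du cu1 hJu1
  have Hu1 := my_holder du1 cu2 hJu2
  have Hm := my_holder dm cm1 hJm1
  have Hm1 := my_holder dm1 cm2 hJm2
  have hsq : Real.sqrt (K2/ε) = Real.sqrt K2 / sε := by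
    rw [Real.sqrt_div hK20, hsedef]
  have hCbound1 : Real.sqrt K2 ≤ C := by
    rw [hCdef]
    have h1 := Real.sqrt_nonneg K0
    linarith [hKApos]
  have hKhC : Real.sqrt (K2/ε) ≤ C / sε := by
    rw [hsq]
    exact (div_le_div_iff_of_pos_right hsεpos).mpr hCbound1
  have honeb : ∀ x ∈ Icc (0:ℝ) 1, ∀ y ∈ Icc (0:ℝ) 1, |x - y| ^ ((1:ℝ)/2) ≤ 1 := by
    intro x hx y hy
    have h1 : |x - y| ≤ 1 := abs_le.mpr ⟨by linarith [hx.1, hy.2], by linarith [hx.2, hy.1]⟩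
    exact Real.rpow_le_one (abs_nonneg _) h1 (by norm_num)
  have Hu' : ∀ x ∈ Icc (0:ℝ) 1, ∀ y ∈ Icc (0:ℝ) 1, |u x - u y| ≤ Real.sqrt (K2/ε) :=
    fun x hx y hy => (Hu x hx y hy).trans
      (mul_le_of_le_one_right (Real.sqrt_nonneg _) (honeb x hx y hy))
  have Hu1' : ∀ x ∈ Icc (0:ℝ) 1, ∀ y ∈ Icc (0:ℝ) 1, |deriv u x - deriv u y| ≤ Real.sqrt (K2/ε) :=
    fun x hx y hy => (Hu1 x hx y hy).trans
      (mul_le_of_le_one_right (Real.sqrt_nonneg _) (honeb x hx y hy))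
  have Hm' : ∀ x ∈ Icc (0:ℝ) 1, ∀ y ∈ Icc (0:ℝ) 1, |m x - m y| ≤ Real.sqrt (K2/ε) :=
    fun x hx y hy => (Hm x hx y hy).trans
      (mul_le_of_le_one_right (Real.sqrt_nonneg _) (honeb x hx y hy))
  have Hm1' : ∀ x ∈ Icc (0:ℝ) 1, ∀ y ∈ Icc (0:ℝ) 1, |deriv m x - deriv m y| ≤ Real.sqrt (K2/ε) :=
    fun x hx y hy => (Hm1 x hx y hy).trans
      (mul_le_of_le_one_right (Real.sqrt_nonneg _) (honeb x hx y hy))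
  have hMu_abs : |∫ t in (0:ℝ)..1, u t| ≤ Real.sqrt K0 / sε := by
    have h : (∫ x in (0:ℝ)..1, u x)^2 ≤ K0/ε := by
      rw [le_div_iff₀ hε]; linarith only [n8]
    have h2 : |∫ t in (0:ℝ)..1, u t| ≤ Real.sqrt (K0/ε) := by
      rw [← Real.sqrt_sq_eq_abs]; exact Real.sqrt_le_sqrt h
    rwa [Real.sqrt_div hK0pos.le, ← hsedef] at h2
  have hA_abs : |∫ t in (0:ℝ)..1, m t| ≤ KA / sε := by
    rw [abs_of_nonneg nA]
    calc (∫ x in (0:ℝ)..1, m x) ≤ KA := c10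
      _ ≤ KA / sε := by
          rw [le_div_iff₀ hsεpos]
          exact mul_le_of_le_one_right hKApos.le hsε1
  have hZu1_abs : |∫ t in (0:ℝ)..1, deriv u t| ≤ (0:ℝ) := by rw [Zu1]; simp
  have hZm1_abs : |∫ t in (0:ℝ)..1, deriv m t| ≤ (0:ℝ) := by rw [Zm1]; simp
  have supu := my_sup cu hup hMu_abs Hu'
  have supu1 := my_sup cu1 hu1per hZu1_abs Hu1'
  have supm := my_sup cm hmp hA_abs Hm'
  have supm1 := my_sup cm1 hm1per hZm1_abs Hm1'
  have hfin1 : Real.sqrt K0 / sε + Real.sqrt (K2/ε) ≤ C / sε := by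
    rw [hsq, ← add_div]
    apply (div_le_div_iff_of_pos_right hsεpos).mpr
    rw [hCdef]
    linarith [hKApos]
  have hfin2 : (0:ℝ) + Real.sqrt (K2/ε) ≤ C / sε := by
    rw [zero_add]; exact hKhC
  have hfin3 : KA / sε + Real.sqrt (K2/ε) ≤ C / sε := by
    rw [hsq, ← add_div]
    apply (div_le_div_iff_of_pos_right hsεpos).mpr
    rw [hCdef]
    linarith [Real.sqrt_nonneg K0, Real.sqrt_nonneg K2]
  have hrnn : ∀ x y : ℝ, 0 ≤ |x - y| ^ ((1:ℝ)/2) :=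
    fun x y => Real.rpow_nonneg (abs_nonneg _) _
  refine ⟨⟨fun x => (supu x).trans hfin1,
      fun x hx y hy => (Hu x hx y hy).trans (mul_le_mul_of_nonneg_right hKhC (hrnn x y))⟩,
    ⟨fun x => (supu1 x).trans hfin2,
      fun x hx y hy => (Hu1 x hx y hy).trans (mul_le_mul_of_nonneg_right hKhC (hrnn x y))⟩,
    ⟨fun x => (supm x).trans hfin3,
      fun x hx y hy => (Hm x hx y hy).trans (mul_le_mul_of_nonneg_right hKhC (hrnn x y))⟩,
    ⟨fun x => (supm1 x).trans hfin2,
      fun x hx y hy => (Hm1 x hx y hy).trans (mul_le_mul_of_nonneg_right hKhC (hrnn x y))⟩⟩
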